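/- For a partition λ of N with largest part λ₁ > N/2, the number of standard Young tableaux of shape λ satisfies f^λ ≥ binomial(λ₁, N − λ₁). -/

import Mathlib

/-- The hook length of the cell `(i,j)` of a Young diagram:
`h(i,j) = (λᵢ - j) + (λ'ⱼ - i) - 1`. -/
def YoungDiagram.hookLength (μ : YoungDiagram) (i j : ℕ) : ℕ :=
  (μ.rowLen i - j) + (μ.colLen j - i) - 1

/-- Standard Young tableaux of shape `μ`: bijective fillings of the cells of `μ`
with `0, …, |μ| - 1` which are strictly increasing along rows and columns. -/
def SYT (μ : YoungDiagram) : Type :=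
  {T : {c // c ∈ μ.cells} ≃ Fin μ.card //
    ∀ c d : {c // c ∈ μ.cells}, c.1.1 ≤ d.1.1 → c.1.2 ≤ d.1.2 → c ≠ d → T c < T d}

/-- `fSYT μ` is the number of standard Young tableaux of shape `μ`. -/
noncomputable def fSYT (μ : YoungDiagram) : ℕ := Nat.card (SYT μ)

namespace SYTaux

open Finset

/-- partial sums of row lengths from row 1 up to (exclusive) row i -/
def Rsum (μ : YoungDiagram) (i : ℕ) : ℕ := ∑ t ∈ Finset.Ico 1 i, μ.rowLen t

lemma card_filter_row (μ : YoungDiagram) (i : ℕ) :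
    (μ.cells.filter fun c => c.1 = i).card = μ.rowLen i := by
  have : (μ.cells.filter fun c => c.1 = i) =
      (Finset.range (μ.rowLen i)).image (fun j => (i, j)) := by
    ext ⟨a, b⟩
    simp only [mem_filter, YoungDiagram.mem_cells, Finset.mem_image, Finset.mem_range,
      Prod.mk.injEq]
    constructor
    · rintro ⟨hab, rfl⟩
      exact ⟨b, YoungDiagram.mem_iff_lt_rowLen.mp hab, rfl, rfl⟩
    · rintro ⟨j, hj, rfl, rfl⟩
      exact ⟨YoungDiagram.mem_iff_lt_rowLen.mpr hj, rfl⟩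
  rw [this, Finset.card_image_of_injective _ (fun x y h => by simpa using h),
    Finset.card_range]

lemma card_filter_lt (μ : YoungDiagram) (i : ℕ) :
    (μ.cells.filter fun c => c.1 < i).card = ∑ t ∈ Finset.range i, μ.rowLen t := by
  induction i with
  | zero => simp
  | succ i ih =>
    have hsplit : (μ.cells.filter fun c => c.1 < i + 1) =
        (μ.cells.filter fun c => c.1 < i) ∪ (μ.cells.filter fun c => c.1 = i) := by
      rw [← Finset.filter_or]
      apply Finset.filter_congr
      intro c _
      omega
    rw [hsplit, Finset.card_union_of_disjoint, ih, card_filter_row,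
      Finset.sum_range_succ]
    rw [Finset.disjoint_left]
    intro c hc hc2
    simp only [Finset.mem_filter] at hc hc2
    omega

lemma sum_range_le (μ : YoungDiagram) (i : ℕ) :
    ∑ t ∈ Finset.range i, μ.rowLen t ≤ μ.card := by
  rw [← card_filter_lt]
  exact Finset.card_filter_le _ _

lemma rowLen_zero_le (μ : YoungDiagram) : μ.rowLen 0 ≤ μ.card := by
  simpa using sum_range_le μ 1

/-- rank bound: for a cell (i,j) with i ≥ 1, rowLen 0 + (Rsum i + j) < card. -/
lemma rank_lt (μ : YoungDiagram) {i j : ℕ} (hij : (i, j) ∈ μ) (hi : 1 ≤ i) :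
    μ.rowLen 0 + (Rsum μ i + j) < μ.card := by
  have h1 : ∑ t ∈ Finset.range (i + 1), μ.rowLen t ≤ μ.card := sum_range_le μ (i + 1)
  have h2 : ∑ t ∈ Finset.range (i + 1), μ.rowLen t
      = μ.rowLen 0 + ∑ t ∈ Finset.Ico 1 (i + 1), μ.rowLen t := by
    rw [Finset.range_eq_Ico, Finset.sum_eq_sum_Ico_succ_bot (by omega)]
  have h3 : ∑ t ∈ Finset.Ico 1 (i + 1), μ.rowLen t = Rsum μ i + μ.rowLen i := by
    rw [Rsum, Finset.sum_Ico_succ_top hi]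
  have h4 : j < μ.rowLen i := YoungDiagram.mem_iff_lt_rowLen.mp hij
  omega

lemma Rsum_mono (μ : YoungDiagram) {i i' : ℕ} (h : i ≤ i') : Rsum μ i ≤ Rsum μ i' := by
  apply Finset.sum_le_sum_of_subset
  exact Finset.Ico_subset_Ico le_rfl h

lemma Rsum_step (μ : YoungDiagram) {i i' : ℕ} (h : i < i') (h1 : 1 ≤ i) :
    Rsum μ i + μ.rowLen i ≤ Rsum μ i' := by
  have : Rsum μ (i + 1) = Rsum μ i + μ.rowLen i := by
    rw [Rsum, Rsum, Finset.sum_Ico_succ_top h1]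
  rw [← this]
  exact Rsum_mono μ h

section Vals

variable {m L : ℕ} {s : Fin m → Fin L} (hs : StrictMono s)

/-- count of r with s r < j -/
def cnt (s : Fin m → Fin L) (j : ℕ) : ℕ :=
  (Finset.univ.filter fun r => ((s r : ℕ) < j)).card

lemma cnt_mono (s : Fin m → Fin L) : Monotone (cnt s) := by
  intro a b hab
  apply Finset.card_le_card
  apply Finset.monotone_filter_right
  intro r hr
  omega

lemma cnt_le_self (s : Fin m → Fin L) (hsinj : Function.Injective s) (j : ℕ) :
    cnt s j ≤ j := by
  rw [cnt]
  have := Finset.card_le_card_of_injOn (fun r : Fin m => (s r : ℕ))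
    (s := Finset.univ.filter fun r => ((s r : ℕ) < j)) (t := Finset.range j) ?_ ?_
  · simpa using this
  · intro r hr
    simp only [Finset.mem_coe, Finset.mem_filter] at hr
    simp [hr.2]
  · intro a ha b hb hab
    exact hsinj (Fin.val_injective hab)

lemma cnt_le_m (s : Fin m → Fin L) (j : ℕ) : cnt s j ≤ m := by
  have := Finset.card_filter_le Finset.univ (fun r : Fin m => ((s r : ℕ) < j))
  simpa [cnt] using this

lemma cnt_top (s : Fin m → Fin L) : cnt s L = m := by
  rw [cnt]
  rw [Finset.filter_true_of_mem (fun r _ => (s r).2)]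
  simp

include hs

lemma le_s : ∀ n (h : n < m), n ≤ (s ⟨n, h⟩ : ℕ) := by
  intro n
  induction n with
  | zero => intro h; exact Nat.zero_le _
  | succ n ih =>
    intro h
    have hn : n < m := by omega
    have := hs (show (⟨n, hn⟩ : Fin m) < ⟨n + 1, h⟩ by simp [Fin.lt_def])
    have := ih hn
    simp only [Fin.lt_def] at *
    omega

lemma top_lt_low {j : ℕ} {r : Fin m} (hj : j ≤ (s r : ℕ)) :
    j + cnt s j < (s r : ℕ) + 1 + r := by
  have hcnt : cnt s j ≤ (r : ℕ) := by
    rw [cnt, ← Fin.card_Iio r]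
    apply Finset.card_le_card
    intro t ht
    simp only [Finset.mem_filter, Finset.mem_univ, true_and] at ht
    simp only [Finset.mem_Iio]
    by_contra hc
    push_neg at hc
    have := hs.monotone hc
    have : (s r : ℕ) ≤ (s t : ℕ) := this
    omega
  omega

lemma low_lt_top {j : ℕ} {r : Fin m} (hj : (s r : ℕ) < j) :
    (s r : ℕ) + 1 + r < j + cnt s j := by
  have hcnt : (r : ℕ) + 1 ≤ cnt s j := by
    rw [cnt, ← Fin.card_Iic r]
    apply Finset.card_le_card
    intro t ht
    simp only [Finset.mem_Iic] at ht
    simp only [Finset.mem_filter, Finset.mem_univ, true_and]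
    have : (s t : ℕ) ≤ (s r : ℕ) := hs.monotone ht
    omega
  omega

end Vals

/-- the value of the filling at a cell -/
def tval (μ : YoungDiagram) {m L : ℕ} (s : Fin m → Fin L) (c : ℕ × ℕ) : ℕ :=
  if c.1 = 0 then c.2 + cnt s c.2
  else if h : Rsum μ c.1 + c.2 < m then (s ⟨Rsum μ c.1 + c.2, h⟩ : ℕ) + 1 + (Rsum μ c.1 + c.2)
  else 0

lemma tval_top (μ : YoungDiagram) {m L : ℕ} (s : Fin m → Fin L) {c : ℕ × ℕ} (h : c.1 = 0) :
    tval μ s c = c.2 + cnt s c.2 := by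
  rw [tval, if_pos h]

lemma tval_top' (μ : YoungDiagram) {m L : ℕ} (s : Fin m → Fin L) (j : ℕ) :
    tval μ s (0, j) = j + cnt s j :=
  tval_top μ s rfl

section Main

variable {μ : YoungDiagram} {m : ℕ} {s : Fin m → Fin (μ.rowLen 0)}

lemma rank_lt_m (hm : μ.card = μ.rowLen 0 + m) {i j : ℕ} (hij : (i, j) ∈ μ) (hi : i ≠ 0) :
    Rsum μ i + j < m := by
  have := rank_lt μ hij (by omega)
  omega

lemma tval_lt_card (hm : μ.card = μ.rowLen 0 + m) {c : ℕ × ℕ} (hc : c ∈ μ) :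
    tval μ s c < μ.card := by
  rw [tval]
  by_cases h0 : c.1 = 0
  · rw [if_pos h0]
    have h1 : c.2 < μ.rowLen 0 := by
      rw [← YoungDiagram.mem_iff_lt_rowLen]
      rw [show (0, c.2) = c from Prod.ext h0.symm rfl]
      exact hc
    have h2 := cnt_le_m s c.2
    omega
  · rw [if_neg h0]
    have hr : Rsum μ c.1 + c.2 < m := rank_lt_m hm (by rwa [Prod.mk.eta]) h0
    rw [dif_pos hr]
    have := (s ⟨Rsum μ c.1 + c.2, hr⟩).2
    omega

lemma tval_strict (hs : StrictMono s) (hm : μ.card = μ.rowLen 0 + m)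
    {c d : ℕ × ℕ} (hc : c ∈ μ) (hd : d ∈ μ)
    (h1 : c.1 ≤ d.1) (h2 : c.2 ≤ d.2) (hne : c ≠ d) :
    tval μ s c < tval μ s d := by
  rw [tval, tval]
  by_cases hd0 : d.1 = 0
  · have hc0 : c.1 = 0 := by omega
    rw [if_pos hc0, if_pos hd0]
    have hne2 : c.2 ≠ d.2 := by
      intro hx
      exact hne (Prod.ext (by omega) hx)
    have := cnt_mono s h2
    omega
  · have hrd : Rsum μ d.1 + d.2 < m := rank_lt_m hm (by rwa [Prod.mk.eta]) hd0
    rw [if_neg hd0, dif_pos hrd]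
    by_cases hc0 : c.1 = 0
    · rw [if_pos hc0]
      apply top_lt_low hs
      have hle : Rsum μ d.1 + d.2 ≤ (s ⟨Rsum μ d.1 + d.2, hrd⟩ : ℕ) := le_s hs _ _
      omega
    · have hrc : Rsum μ c.1 + c.2 < m := rank_lt_m hm (by rwa [Prod.mk.eta]) hc0
      rw [if_neg hc0, dif_pos hrc]
      have hrank : Rsum μ c.1 + c.2 < Rsum μ d.1 + d.2 := by
        rcases Nat.lt_or_ge c.1 d.1 with hlt | hge
        · have hstep := Rsum_step μ hlt (by omega)
          have hcl : c.2 < μ.rowLen c.1 := by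
            rw [← YoungDiagram.mem_iff_lt_rowLen, Prod.mk.eta]
            exact hc
          omega
        · have : c.1 = d.1 := by omega
          have hne2 : c.2 ≠ d.2 := by
            intro hx
            exact hne (Prod.ext this hx)
          rw [this]
          omega
      have := hs (show (⟨Rsum μ c.1 + c.2, hrc⟩ : Fin m) < ⟨Rsum μ d.1 + d.2, hrd⟩ by
        simp [Fin.lt_def, hrank])
      rw [Fin.lt_def] at this
      omega

lemma tval_inj (hs : StrictMono s) (hm : μ.card = μ.rowLen 0 + m)
    {c d : ℕ × ℕ} (hc : c ∈ μ) (hd : d ∈ μ)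
    (heq : tval μ s c = tval μ s d) : c = d := by
  by_contra hne
  rcases Nat.lt_trichotomy c.1 d.1 with h1 | h1 | h1
  · rcases le_or_gt c.2 d.2 with h2 | h2
    · exact absurd heq (Nat.ne_of_lt (tval_strict hs hm hc hd (le_of_lt h1) h2 hne))
    · -- c.1 < d.1, d.2 < c.2 : incomparable; use structure
      -- c could be top (c.1 = 0) or low
      by_cases hc0 : c.1 = 0
      · have hd0 : d.1 ≠ 0 := by omega
        have hrd : Rsum μ d.1 + d.2 < m := rank_lt_m hm (by rwa [Prod.mk.eta]) hd0
        rw [tval, tval, if_pos hc0, if_neg hd0, dif_pos hrd] at heq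
        set r : Fin m := ⟨Rsum μ d.1 + d.2, hrd⟩
        rcases le_or_gt c.2 (s r : ℕ) with hj | hj
        · exact absurd heq (Nat.ne_of_lt (top_lt_low hs hj))
        · exact absurd heq.symm (Nat.ne_of_lt (low_lt_top hs hj))
      · have hd0 : d.1 ≠ 0 := by omega
        have hrc : Rsum μ c.1 + c.2 < m := rank_lt_m hm (by rwa [Prod.mk.eta]) hc0
        have hrd : Rsum μ d.1 + d.2 < m := rank_lt_m hm (by rwa [Prod.mk.eta]) hd0
        rw [tval, tval, if_neg hc0, if_neg hd0, dif_pos hrc, dif_pos hrd] at heq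
        have hrank : Rsum μ c.1 + c.2 < Rsum μ d.1 + d.2 := by
          have hstep := Rsum_step μ h1 (by omega)
          have hcl : c.2 < μ.rowLen c.1 := by
            rw [← YoungDiagram.mem_iff_lt_rowLen, Prod.mk.eta]
            exact hc
          omega
        have := hs (show (⟨Rsum μ c.1 + c.2, hrc⟩ : Fin m) < ⟨Rsum μ d.1 + d.2, hrd⟩ by
          simp [Fin.lt_def, hrank])
        rw [Fin.lt_def] at this
        omega
  · -- c.1 = d.1
    have hne2 : c.2 ≠ d.2 := fun hx => hne (Prod.ext h1 hx)
    rcases Nat.lt_or_ge c.2 d.2 with h2 | h2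
    · exact absurd heq (Nat.ne_of_lt (tval_strict hs hm hc hd (le_of_eq h1) (le_of_lt h2) hne))
    · have h2' : d.2 < c.2 := by omega
      exact absurd heq.symm (Nat.ne_of_lt
        (tval_strict hs hm hd hc (le_of_eq h1.symm) (le_of_lt h2') (Ne.symm hne)))
  · rcases le_or_gt d.2 c.2 with h2 | h2
    · exact absurd heq.symm (Nat.ne_of_lt (tval_strict hs hm hd hc (le_of_lt h1) h2 (Ne.symm hne)))
    · by_cases hd0 : d.1 = 0
      · have hc0 : c.1 ≠ 0 := by omega
        have hrc : Rsum μ c.1 + c.2 < m := rank_lt_m hm (by rwa [Prod.mk.eta]) hc0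
        rw [tval, tval, if_neg hc0, if_pos hd0, dif_pos hrc] at heq
        set r : Fin m := ⟨Rsum μ c.1 + c.2, hrc⟩
        rcases le_or_gt d.2 (s r : ℕ) with hj | hj
        · exact absurd heq.symm (Nat.ne_of_lt (top_lt_low hs hj))
        · exact absurd heq (Nat.ne_of_lt (low_lt_top hs hj))
      · have hc0 : c.1 ≠ 0 := by omega
        have hrc : Rsum μ c.1 + c.2 < m := rank_lt_m hm (by rwa [Prod.mk.eta]) hc0
        have hrd : Rsum μ d.1 + d.2 < m := rank_lt_m hm (by rwa [Prod.mk.eta]) hd0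
        rw [tval, tval, if_neg hc0, if_neg hd0, dif_pos hrc, dif_pos hrd] at heq
        have hrank : Rsum μ d.1 + d.2 < Rsum μ c.1 + c.2 := by
          have hstep := Rsum_step μ h1 (by omega)
          have hdl : d.2 < μ.rowLen d.1 := by
            rw [← YoungDiagram.mem_iff_lt_rowLen, Prod.mk.eta]
            exact hd
          omega
        have := hs (show (⟨Rsum μ d.1 + d.2, hrd⟩ : Fin m) < ⟨Rsum μ c.1 + c.2, hrc⟩ by
          simp [Fin.lt_def, hrank])
        rw [Fin.lt_def] at this
        omega

lemma cnt_succ {m L : ℕ} (s : Fin m → Fin L) (hinj : Function.Injective s) (x : Fin L) :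
    cnt s ((x : ℕ) + 1) = cnt s (x : ℕ) + (if ∃ r, s r = x then 1 else 0) := by
  classical
  have hsplit : (Finset.univ.filter fun r : Fin m => ((s r : ℕ) < (x : ℕ) + 1)) =
      (Finset.univ.filter fun r => ((s r : ℕ) < (x : ℕ))) ∪
      (Finset.univ.filter fun r => s r = x) := by
    rw [← Finset.filter_or]
    apply Finset.filter_congr
    intro r _
    constructor
    · intro hr
      rcases Nat.lt_or_ge (s r : ℕ) (x : ℕ) with h' | h'
      · exact Or.inl h'
      · exact Or.inr (Fin.ext (by omega))
    · rintro (h' | h')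
      · omega
      · rw [h']
        omega
  rw [cnt, cnt, hsplit, Finset.card_union_of_disjoint]
  · congr 1
    by_cases hex : ∃ r, s r = x
    · rw [if_pos hex]
      obtain ⟨r0, hr0⟩ := hex
      have : (Finset.univ.filter fun r => s r = x) = {r0} := by
        ext t
        simp only [Finset.mem_filter, Finset.mem_univ, true_and, Finset.mem_singleton]
        constructor
        · intro ht
          exact hinj (ht.trans hr0.symm)
        · rintro rfl
          exact hr0
      rw [this, Finset.card_singleton]
    · rw [if_neg hex]
      rw [Finset.card_eq_zero, Finset.filter_eq_empty_iff]
      intro r _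
      exact fun hr => hex ⟨r, hr⟩
  · rw [Finset.disjoint_left]
    intro r hr hr2
    simp only [Finset.mem_filter, Finset.mem_univ, true_and] at hr hr2
    rw [hr2] at hr
    omega

end Main

end SYTaux

open SYTaux in
theorem stmt0 (N : ℕ) (μ : YoungDiagram) (hμ : μ.card = N)
    (h : N < 2 * μ.rowLen 0) :
    Nat.choose (μ.rowLen 0) (N - μ.rowLen 0) ≤ fSYT μ := by
  classical
  subst hμ
  set L := μ.rowLen 0 with hL
  have hLle : L ≤ μ.card := rowLen_zero_le μ
  set m := μ.card - L with hm0
  have hm : μ.card = L + m := by omega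
  -- the domain of the injection
  let D := {A : Finset (Fin L) // A.card = m}
  -- the map from D to SYT μ
  have key : ∀ A : D, ∃ T : SYT μ, ∀ (c : {c // c ∈ μ.cells}),
      (T.1 c : ℕ) = tval μ ⇑(A.1.orderEmbOfFin A.2) c.1 := by
    intro A
    set s : Fin m → Fin L := ⇑(A.1.orderEmbOfFin A.2) with hsdef
    have hs : StrictMono s := (A.1.orderEmbOfFin A.2).strictMono
    have hmem : ∀ c : {c // c ∈ μ.cells}, c.1 ∈ μ := fun c => by
      have := c.2; rwa [YoungDiagram.mem_cells] at this
    let f : {c // c ∈ μ.cells} → Fin μ.card :=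
      fun c => ⟨tval μ s c.1, tval_lt_card hm (hmem c)⟩
    have hfinj : Function.Injective f := by
      intro c d hcd
      have : tval μ s c.1 = tval μ s d.1 := congrArg Fin.val hcd
      exact Subtype.ext (tval_inj hs hm (hmem c) (hmem d) this)
    have hbij : Function.Bijective f := by
      rw [Fintype.bijective_iff_injective_and_card]
      exact ⟨hfinj, by simp [Fintype.card_coe]⟩
    refine ⟨⟨Equiv.ofBijective f hbij, ?_⟩, fun c => rfl⟩
    intro c d h1 h2 hne
    have : tval μ s c.1 < tval μ s d.1 :=
      tval_strict hs hm (hmem c) (hmem d) h1 h2 (fun hx => hne (Subtype.ext hx))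
    exact this
  choose F hF using key
  have hFinj : Function.Injective F := by
    intro A B hAB
    have hvals : ∀ c : {c // c ∈ μ.cells},
        tval μ ⇑(A.1.orderEmbOfFin A.2) c.1 = tval μ ⇑(B.1.orderEmbOfFin B.2) c.1 := by
      intro c
      rw [← hF A c, ← hF B c, hAB]
    -- values on top row give cnt equality
    have hcnt : ∀ j, j < L → cnt ⇑(A.1.orderEmbOfFin A.2) j = cnt ⇑(B.1.orderEmbOfFin B.2) j := by
      intro j hj
      have hmemj : (0, j) ∈ μ.cells := by
        rw [YoungDiagram.mem_cells, YoungDiagram.mem_iff_lt_rowLen]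
        exact hj
      have this2 : tval μ ⇑(A.1.orderEmbOfFin A.2) (0, j)
          = tval μ ⇑(B.1.orderEmbOfFin B.2) (0, j) := hvals ⟨(0, j), hmemj⟩
      rw [tval_top' , tval_top'] at this2
      omega
    have hcnt' : ∀ j, j ≤ L → cnt ⇑(A.1.orderEmbOfFin A.2) j = cnt ⇑(B.1.orderEmbOfFin B.2) j := by
      intro j hj
      rcases Nat.lt_or_ge j L with h' | h'
      · exact hcnt j h'
      · have : j = L := by omega
        rw [this, cnt_top, cnt_top]
    apply Subtype.ext
    ext x
    have hAx : x ∈ A.1 ↔ ∃ r, A.1.orderEmbOfFin A.2 r = x := by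
      constructor
      · intro hx
        have hx2 : x ∈ Set.range ⇑(A.1.orderEmbOfFin A.2) := by
          rw [Finset.range_orderEmbOfFin]
          exact hx
        exact hx2
      · rintro ⟨r, rfl⟩
        exact Finset.orderEmbOfFin_mem _ _ _
    have hBx : x ∈ B.1 ↔ ∃ r, B.1.orderEmbOfFin B.2 r = x := by
      constructor
      · intro hx
        have hx2 : x ∈ Set.range ⇑(B.1.orderEmbOfFin B.2) := by
          rw [Finset.range_orderEmbOfFin]
          exact hx
        exact hx2
      · rintro ⟨r, rfl⟩
        exact Finset.orderEmbOfFin_mem _ _ _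
    have hA1 := cnt_succ (A.1.orderEmbOfFin A.2) (A.1.orderEmbOfFin A.2).injective x
    have hB1 := cnt_succ (B.1.orderEmbOfFin B.2) (B.1.orderEmbOfFin B.2).injective x
    have e1 := hcnt' (x : ℕ) (le_of_lt x.2)
    have e2 := hcnt' ((x : ℕ) + 1) x.2
    rw [hAx, hBx]
    by_cases hxa : ∃ r, A.1.orderEmbOfFin A.2 r = x
    · by_cases hxb : ∃ r, B.1.orderEmbOfFin B.2 r = x
      · exact iff_of_true hxa hxb
      · exfalso
        rw [if_pos hxa] at hA1
        rw [if_neg hxb] at hB1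
        omega
    · by_cases hxb : ∃ r, B.1.orderEmbOfFin B.2 r = x
      · exfalso
        rw [if_neg hxa] at hA1
        rw [if_pos hxb] at hB1
        omega
      · exact iff_of_false hxa hxb
  have hfin : Finite (SYT μ) := by
    unfold SYT
    infer_instance
  have hcard : Nat.card D = Nat.choose L m := by
    rw [Nat.card_eq_fintype_card]
    simp [D]
  calc Nat.choose L (μ.card - L) = Nat.card D := by rw [hcard]
    _ ≤ Nat.card (SYT μ) := Nat.card_le_card_of_injective F hFinj
    _ = fSYT μ := rfl
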